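/- For x > 0 define w(x) = e^{1/(2x²)} · ∫_0^x e^{-1/(2t²)} · t^{-2} dt (the integrand extended by 0 at t = 0). Then w is differentiable on (0,∞) and satisfies x³ · w′(x) + w(x) = x for all x > 0; moreover w(1) = √e · ∫_1^∞ e^{-t²/2} dt. -/

import Mathlib

open MeasureTheory Set Real

noncomputable def eulerG (t : ℝ) : ℝ := Real.exp (-1 / (2 * t ^ 2)) / t ^ 2

lemma eulerG_meas : Measurable eulerG := by
  unfold eulerG
  exact (Real.measurable_exp.comp ((measurable_const).div
    ((measurable_const.mul (measurable_id.pow_const 2))))).div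
    (measurable_id.pow_const 2)

lemma eulerG_nonneg (t : ℝ) : 0 ≤ eulerG t := by
  unfold eulerG
  positivity

lemma eulerG_le_two (t : ℝ) : eulerG t ≤ 2 := by
  unfold eulerG
  rcases eq_or_ne t 0 with h | h
  · simp [h]
  · have ht2 : (0:ℝ) < t ^ 2 := by positivity
    set u : ℝ := 1 / (2 * t ^ 2) with hu
    have hu0 : 0 < u := by positivity
    have h1 : Real.exp (-1 / (2 * t ^ 2)) = Real.exp (-u) := by
      rw [hu]; ring_nf
    rw [h1]
    have h2 : (1:ℝ) / t ^ 2 = 2 * u := by rw [hu]; field_simp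
    have h3 : Real.exp (-u) ≤ 1 / (1 + u) := by
      rw [Real.exp_neg, inv_eq_one_div,
        div_le_div_iff₀ (Real.exp_pos u) (by positivity)]
      nlinarith [Real.add_one_le_exp u]
    calc Real.exp (-u) / t ^ 2 = Real.exp (-u) * (1 / t ^ 2) := by ring
      _ = Real.exp (-u) * (2 * u) := by rw [h2]
      _ ≤ (1 / (1 + u)) * (2 * u) := by
          apply mul_le_mul_of_nonneg_right h3 (by positivity)
      _ ≤ 2 := by
          rw [div_mul_eq_mul_div, div_le_iff₀ (by positivity)]
          nlinarith

lemma eulerG_integrableOn (b : ℝ) : IntegrableOn eulerG (Set.Ioc 0 b) := by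
  apply Measure.integrableOn_of_bounded (measure_Ioc_lt_top).ne
    eulerG_meas.aestronglyMeasurable (M := 2)
  filter_upwards with t
  rw [Real.norm_eq_abs, abs_of_nonneg (eulerG_nonneg t)]
  exact eulerG_le_two t

lemma eulerG_contAt {x : ℝ} (hx : x ≠ 0) : ContinuousAt eulerG x := by
  have h2 : (x:ℝ) ^ 2 ≠ 0 := pow_ne_zero _ hx
  unfold eulerG
  exact ((Real.continuous_exp.continuousAt).comp
    ((continuousAt_const.div (by fun_prop) (by simpa using h2)))).div (by fun_prop)
    h2

theorem euler_ODE_section29 :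
    (∀ x : ℝ, 0 < x → ∃ d : ℝ,
      HasDerivAt
        (fun y : ℝ => Real.exp (1 / (2 * y ^ 2)) *
          ∫ t in Set.Ioo (0 : ℝ) y, Real.exp (-1 / (2 * t ^ 2)) / t ^ 2) d x ∧
      x ^ 3 * d +
        Real.exp (1 / (2 * x ^ 2)) *
          (∫ t in Set.Ioo (0 : ℝ) x, Real.exp (-1 / (2 * t ^ 2)) / t ^ 2) = x) ∧
    Real.exp (1 / (2 * (1 : ℝ) ^ 2)) *
        (∫ t in Set.Ioo (0 : ℝ) 1, Real.exp (-1 / (2 * t ^ 2)) / t ^ 2) =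
      Real.sqrt (Real.exp 1) * ∫ t in Set.Ioi (1 : ℝ), Real.exp (-t ^ 2 / 2) := by
  have hIoo : ∀ y : ℝ, (∫ t in Set.Ioo (0 : ℝ) y, Real.exp (-1 / (2 * t ^ 2)) / t ^ 2)
      = ∫ t in Set.Ioo (0:ℝ) y, eulerG t := fun y => rfl
  constructor
  · intro x hx
    have hx0 : x ≠ 0 := ne_of_gt hx
    have hx2 : x ^ 2 ≠ 0 := pow_ne_zero _ hx0
    -- derivative of the integral part
    have hii : IntervalIntegrable eulerG volume 0 x := by
      rw [intervalIntegrable_iff_integrableOn_Ioc_of_le hx.le]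
      exact eulerG_integrableOn x
    have hF : HasDerivAt (fun y => ∫ t in (0:ℝ)..y, eulerG t) (eulerG x) x :=
      intervalIntegral.integral_hasDerivAt_right hii
        (eulerG_meas.stronglyMeasurable.stronglyMeasurableAtFilter)
        (eulerG_contAt hx0)
    have heq : (fun y : ℝ => ∫ t in Set.Ioo (0:ℝ) y, eulerG t)
        =ᶠ[nhds x] (fun y => ∫ t in (0:ℝ)..y, eulerG t) := by
      filter_upwards [eventually_gt_nhds hx] with y hy
      rw [intervalIntegral.integral_of_le hy.le, integral_Ioc_eq_integral_Ioo]
    have hF' : HasDerivAt (fun y : ℝ => ∫ t in Set.Ioo (0:ℝ) y, eulerG t)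
        (eulerG x) x := hF.congr_of_eventuallyEq heq
    -- derivative of the exponential factor
    have hden : HasDerivAt (fun y : ℝ => 2 * y ^ 2) (4 * x) x := by
      have h := (hasDerivAt_pow 2 x).const_mul (2:ℝ)
      exact h.congr_deriv (by norm_num [← mul_assoc])
    have hq : HasDerivAt (fun y : ℝ => 1 / (2 * y ^ 2))
        ((0 * (2 * x ^ 2) - 1 * (4 * x)) / (2 * x ^ 2) ^ 2) x :=
      (hasDerivAt_const x (1:ℝ)).div hden (by simpa using hx2)
    have hE : HasDerivAt (fun y : ℝ => Real.exp (1 / (2 * y ^ 2)))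
        (Real.exp (1 / (2 * x ^ 2)) *
          ((0 * (2 * x ^ 2) - 1 * (4 * x)) / (2 * x ^ 2) ^ 2)) x := hq.exp
    have hw := hE.mul hF'
    refine ⟨Real.exp (1 / (2 * x ^ 2)) * ((0 * (2 * x ^ 2) - 1 * (4 * x)) / (2 * x ^ 2) ^ 2) *
        (∫ t in Set.Ioo (0:ℝ) x, eulerG t) + Real.exp (1 / (2 * x ^ 2)) * eulerG x, ?_, ?_⟩
    · exact hw
    · rw [hIoo]
      have hder : (0 * (2 * x ^ 2) - 1 * (4 * x)) / (2 * x ^ 2) ^ 2 = -1 / x ^ 3 := by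
        field_simp
        ring
      rw [hder]
      have hexp : Real.exp (1 / (2 * x ^ 2)) * eulerG x = 1 / x ^ 2 := by
        unfold eulerG
        rw [← mul_div_assoc, ← Real.exp_add]
        have : 1 / (2 * x ^ 2) + -1 / (2 * x ^ 2) = 0 := by ring
        rw [this, Real.exp_zero]
      set F := ∫ t in Set.Ioo (0:ℝ) x, eulerG t
      have : x ^ 3 * (Real.exp (1 / (2 * x ^ 2)) * (-1 / x ^ 3) * F
          + Real.exp (1 / (2 * x ^ 2)) * eulerG x)
          = x ^ 3 * (Real.exp (1 / (2 * x ^ 2)) * (-1 / x ^ 3)) * F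
          + x ^ 3 * (1 / x ^ 2) := by rw [hexp]; ring
      rw [this]
      have h1 : x ^ 3 * (Real.exp (1 / (2 * x ^ 2)) * (-1 / x ^ 3))
          = -Real.exp (1 / (2 * x ^ 2)) := by
        field_simp
      rw [h1]
      field_simp
      ring
  · -- the substitution t ↦ 1/t
    have himg : (fun t : ℝ => 1 / t) '' Set.Ioo 0 1 = Set.Ioi (1:ℝ) := by
      ext y
      simp only [Set.mem_image, Set.mem_Ioo, Set.mem_Ioi]
      constructor
      · rintro ⟨t, ⟨ht0, ht1⟩, rfl⟩
        rw [lt_div_iff₀ ht0]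
        linarith
      · intro hy
        have hy0 : 0 < y := lt_trans one_pos hy
        exact ⟨1 / y, ⟨by positivity, by rw [div_lt_one hy0]; exact hy⟩, by
          field_simp⟩
    have hderiv : ∀ t ∈ Set.Ioo (0:ℝ) 1,
        HasDerivWithinAt (fun t : ℝ => 1 / t) (-1 / t ^ 2) (Set.Ioo 0 1) t := by
      intro t ht
      have := (hasDerivAt_inv (ne_of_gt ht.1))
      simpa [one_div, neg_div] using this.hasDerivWithinAt
    have hinj : Set.InjOn (fun t : ℝ => 1 / t) (Set.Ioo 0 1) := by
      intro a ha b hb hab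
      simp only at hab
      field_simp [ha.1.ne', hb.1.ne'] at hab
      exact hab.symm
    have hsub := integral_image_eq_integral_abs_deriv_smul measurableSet_Ioo
      hderiv hinj (fun y => Real.exp (-y ^ 2 / 2))
    rw [himg] at hsub
    rw [hsub]
    have : ∀ t ∈ Set.Ioo (0:ℝ) 1,
        |(-1 / t ^ 2)| • Real.exp (-(1 / t) ^ 2 / 2)
        = Real.exp (-1 / (2 * t ^ 2)) / t ^ 2 := by
      intro t ht
      have ht0 : (0:ℝ) < t := ht.1
      have h1 : |(-1 / t ^ 2)| = 1 / t ^ 2 := by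
        rw [abs_div, abs_neg, abs_one, abs_pow, abs_of_pos ht0]
      have h2 : -(1 / t) ^ 2 / 2 = -1 / (2 * t ^ 2) := by
        field_simp
      rw [h1, h2, smul_eq_mul]
      ring
    rw [setIntegral_congr_fun measurableSet_Ioo this]
    have : Real.sqrt (Real.exp 1) = Real.exp (1 / (2 * (1:ℝ) ^ 2)) := by
      rw [show (1:ℝ) / (2 * (1:ℝ)^2) = 1/2 by norm_num, Real.exp_half]
    rw [this]
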